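/- arXiv:1910.12163 — 2 statements merged into one kernel-verified Lean document; each statement's English description precedes it below -/
import Mathlib

section
/- Let d ≥ 1, let w ∈ ℝ^d with w ≠ 0, let μ₀ ∈ ℝ^d be a unit vector with w·μ₀ ≥ 0, let ε > 0 and δ ≥ 0. Set cos θ = (w·μ₀)/‖w‖₂, sin θ = √(1 − cos²θ), and β = min(ε cos θ, δ). Then the supremum of w·v over the set D_{ε,δ} = {v ∈ ℝ^d : ‖v‖₂ ≤ ε and |v·μ₀| ≤ δ} equals ‖w‖₂ · (β cos θ + √(ε² − β²) sin θ), and this supremum is attained. -/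
open MeasureTheory ProbabilityTheory
open scoped ENNReal NNReal

/-- Euclidean inner product on `ℝ^d`. -/
noncomputable def dotp {d : ℕ} (w x : Fin d → ℝ) : ℝ := ∑ i, w i * x i

/-- The `ℓ₂` norm on `ℝ^d`. -/
noncomputable def l2 {d : ℕ} (w : Fin d → ℝ) : ℝ := Real.sqrt (∑ i, (w i)^2)

/-- The product Gaussian measure `N(m, σ²I_d)` on `ℝ^d`. -/
noncomputable def gaussPi {d : ℕ} (m : Fin d → ℝ) (σ : ℝ) : Measure (Fin d → ℝ) :=
  Measure.pi fun i => gaussianReal (m i) ((σ^2).toNNReal)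

/-- The standard normal cumulative distribution function `Φ`. -/
noncomputable def Phi (x : ℝ) : ℝ := ((gaussianReal 0 1) (Set.Iic x)).toReal

/-- The `ℓp` norm on `ℝ^d` for `p ∈ [1,∞]` (as an extended real exponent). -/
noncomputable def lpnorm {d : ℕ} (p : ℝ≥0∞) (v : Fin d → ℝ) : ℝ :=
  if p = ∞ then ⨆ i, |v i| else (∑ i, |v i| ^ p.toReal) ^ (1 / p.toReal)

/-- The `ℓp` norm on `ℝ^d` for a real exponent `p ∈ [1,∞)`. -/
noncomputable def lpR {d : ℕ} (p : ℝ) (v : Fin d → ℝ) : ℝ := (∑ i, |v i| ^ p) ^ (1/p)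

lemma dotp_comm {d : ℕ} (w x : Fin d → ℝ) : dotp w x = dotp x w := by
  unfold dotp; exact Finset.sum_congr rfl fun i _ => mul_comm _ _

lemma dotp_self_nonneg {d : ℕ} (v : Fin d → ℝ) : 0 ≤ dotp v v :=
  Finset.sum_nonneg fun i _ => mul_self_nonneg _

lemma dotp_self_eq {d : ℕ} (v : Fin d → ℝ) : dotp v v = ∑ i, (v i)^2 := by
  unfold dotp; exact Finset.sum_congr rfl fun i _ => by ring

lemma l2_eq_sqrt_dotp {d : ℕ} (v : Fin d → ℝ) : l2 v = Real.sqrt (dotp v v) := by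
  rw [l2, dotp_self_eq]

lemma l2_nonneg {d : ℕ} (v : Fin d → ℝ) : 0 ≤ l2 v := Real.sqrt_nonneg _

lemma l2_sq {d : ℕ} (v : Fin d → ℝ) : (l2 v)^2 = dotp v v := by
  rw [l2_eq_sqrt_dotp, Real.sq_sqrt (dotp_self_nonneg v)]

lemma l2_pos {d : ℕ} {v : Fin d → ℝ} (hv : v ≠ 0) : 0 < l2 v := by
  rw [l2]
  apply Real.sqrt_pos.mpr
  obtain ⟨i, hi⟩ := Function.ne_iff.mp hv
  have h1 : (0:ℝ) < (v i)^2 := lt_of_le_of_ne (sq_nonneg _) (Ne.symm (pow_ne_zero 2 hi))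
  exact lt_of_lt_of_le h1 (Finset.single_le_sum (fun j _ => sq_nonneg (v j)) (Finset.mem_univ i))

lemma dotp_cs {d : ℕ} (u v : Fin d → ℝ) : dotp u v ≤ l2 u * l2 v := by
  have h := Finset.sum_mul_sq_le_sq_mul_sq Finset.univ u v
  have h2 : dotp u v ≤ Real.sqrt ((∑ i, (u i)^2) * (∑ i, (v i)^2)) := by
    calc dotp u v ≤ |dotp u v| := le_abs_self _
    _ = Real.sqrt ((dotp u v)^2) := (Real.sqrt_sq_eq_abs _).symm
    _ ≤ _ := Real.sqrt_le_sqrt h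
  rwa [Real.sqrt_mul (Finset.sum_nonneg fun i _ => sq_nonneg _)] at h2

lemma dotp_lin_right {d : ℕ} (w y z : Fin d → ℝ) (p q : ℝ) :
    dotp w (fun i => p * y i + q * z i) = p * dotp w y + q * dotp w z := by
  unfold dotp
  rw [Finset.mul_sum, Finset.mul_sum, ← Finset.sum_add_distrib]
  exact Finset.sum_congr rfl fun i _ => by ring

lemma dotp_lin_left {d : ℕ} (w y z : Fin d → ℝ) (p q : ℝ) :
    dotp (fun i => p * y i + q * z i) w = p * dotp y w + q * dotp z w := by
  rw [dotp_comm, dotp_lin_right, dotp_comm y w, dotp_comm z w]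

lemma dotp_sub_right {d : ℕ} (w y z : Fin d → ℝ) (c : ℝ) :
    dotp w (fun i => y i - c * z i) = dotp w y - c * dotp w z := by
  unfold dotp
  rw [Finset.mul_sum, ← Finset.sum_sub_distrib]
  exact Finset.sum_congr rfl fun i _ => by ring

lemma dotp_sub_left {d : ℕ} (w y z : Fin d → ℝ) (c : ℝ) :
    dotp (fun i => y i - c * z i) w = dotp y w - c * dotp z w := by
  rw [dotp_comm, dotp_sub_right, dotp_comm y w, dotp_comm z w]

set_option maxHeartbeats 1000000 in
lemma scalar_key (a b n ε δ t : ℝ) (ha : 0 ≤ a) (hb : 0 ≤ b)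
    (hn : 0 < n) (hab : a^2 + b^2 = n^2) (hε : 0 < ε) (hδ : 0 ≤ δ)
    (htδ : |t| ≤ δ) (htε : t^2 ≤ ε^2) :
    a * t + b * Real.sqrt (ε^2 - t^2) ≤
      a * min (ε * (a / n)) δ + b * Real.sqrt (ε^2 - (min (ε * (a / n)) δ)^2) := by
  set β := min (ε * (a/n)) δ with hβdef
  have han : a ≤ n := by nlinarith [sq_nonneg b]
  have hεan : 0 ≤ ε * (a/n) := by positivity
  have hβ0 : 0 ≤ β := le_min hεan hδ
  have hβδ : β ≤ δ := min_le_right _ _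
  have hnβ : n * β ≤ ε * a := by
    have h1 : β ≤ ε * (a/n) := min_le_left _ _
    have h2 : n * β ≤ n * (ε * (a/n)) := by nlinarith
    have h3 : n * (ε * (a/n)) = ε * a := by field_simp
    linarith
  have hβε : β ≤ ε := by nlinarith
  have hβ2 : β^2 ≤ ε^2 := by nlinarith
  set s := Real.sqrt (ε^2 - t^2) with hsdef
  set σ := Real.sqrt (ε^2 - β^2) with hσdef
  have hs0 : 0 ≤ s := Real.sqrt_nonneg _
  have hσ0 : 0 ≤ σ := Real.sqrt_nonneg _
  have hs2 : s^2 = ε^2 - t^2 := Real.sq_sqrt (by linarith)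
  have hσ2 : σ^2 = ε^2 - β^2 := Real.sq_sqrt (by linarith)
  have hnβ2 : (n*β)^2 ≤ (ε*a)^2 := by nlinarith [mul_nonneg hn.le hβ0]
  have hnσ : ε * b ≤ n * σ := by
    have h1 : (ε*b)^2 ≤ (n*σ)^2 := by nlinarith
    have h2 := Real.sqrt_le_sqrt h1
    rwa [Real.sqrt_sq (by positivity), Real.sqrt_sq (by positivity)] at h2
  rcases le_or_gt (ε * (a/n)) δ with hcase | hcase
  · have hβeq : β = ε * (a/n) := min_eq_left hcase
    have hσsq : ε^2 - β^2 = (ε*(b/n))^2 := by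
      rw [hβeq]; field_simp; linear_combination (-1) * hab
    have hσeq : σ = ε * (b/n) := by
      rw [hσdef, hσsq, Real.sqrt_sq (by positivity)]
    have hRHS : a * β + b * σ = ε * n := by
      rw [hβeq, hσeq]; field_simp; linear_combination hab
    rw [hRHS]
    nlinarith [sq_nonneg (a*s - b*t), mul_pos hε hn]
  · have hβeq : β = δ := min_eq_right hcase.le
    have htβ : t ≤ β := le_trans (le_abs_self t) (by rw [hβeq]; exact htδ)
    have hbt : b * t ≤ a * s := by
      rcases le_or_gt t 0 with ht0 | ht0
      · have h1 : b * t ≤ 0 := mul_nonpos_of_nonneg_of_nonpos hb ht0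
        have h2 : 0 ≤ a * s := mul_nonneg ha hs0
        linarith
      · have hnt : n * t ≤ ε * a := le_trans (by nlinarith) hnβ
        have hns : ε * b ≤ n * s := by
          have h1 : (ε*b)^2 ≤ (n*s)^2 := by nlinarith [mul_nonneg hn.le ht0.le]
          have h2 := Real.sqrt_le_sqrt h1
          rwa [Real.sqrt_sq (by positivity), Real.sqrt_sq (by positivity)] at h2
        nlinarith [mul_nonneg hb ht0.le]
    have hbβ : b * β ≤ a * σ := by nlinarith [mul_nonneg hb hβ0]
    rcases eq_or_lt_of_le (add_nonneg hs0 hσ0) with hsσ | hsσ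
    · have hs' : s = 0 := by linarith
      have hσ' : σ = 0 := by linarith
      rw [hs', hσ', mul_zero, add_zero, add_zero]
      exact mul_le_mul_of_nonneg_left htβ ha
    · have key : b * (s - σ) ≤ a * (β - t) := by
        apply le_of_mul_le_mul_right _ hsσ
        have h1 : b * (s - σ) * (s + σ) = b * (β - t) * (β + t) := by nlinarith
        have h2 : b * (β + t) ≤ a * (s + σ) := by linarith
        calc b * (s - σ) * (s + σ) = (β - t) * (b * (β + t)) := by rw [h1]; ring
        _ ≤ (β - t) * (a * (s + σ)) := mul_le_mul_of_nonneg_left h2 (by linarith)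
        _ = a * (β - t) * (s + σ) := by ring
      nlinarith


set_option maxHeartbeats 1000000 in
/-- the supremum of `w·v` over `D_{ε,δ} = {v : ‖v‖₂ ≤ ε, |v·μ₀| ≤ δ}`
equals `‖w‖₂ (β cos θ + √(ε² − β²) sin θ)` and is attained. -/
theorem strong_adversarial_sup {d : ℕ} (hd : 1 ≤ d)
    (w : Fin d → ℝ) (hw : w ≠ 0)
    (μ₀ : Fin d → ℝ) (hμ₀ : l2 μ₀ = 1) (hwμ : 0 ≤ dotp w μ₀)
    (ε δ : ℝ) (hε : 0 < ε) (hδ : 0 ≤ δ)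
    (cosθ sinθ β : ℝ)
    (hcos : cosθ = dotp w μ₀ / l2 w)
    (hsin : sinθ = Real.sqrt (1 - cosθ^2))
    (hβ : β = min (ε * cosθ) δ) :
    IsGreatest ((fun v => dotp w v) '' {v : Fin d → ℝ | l2 v ≤ ε ∧ |dotp v μ₀| ≤ δ})
      (l2 w * (β * cosθ + Real.sqrt (ε^2 - β^2) * sinθ)) := by
  set n := l2 w with hndef
  set a := dotp w μ₀ with hadef
  have hn : 0 < n := l2_pos hw
  have hμμ : dotp μ₀ μ₀ = 1 := by rw [← l2_sq, hμ₀]; norm_num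
  have hww : dotp w w = n^2 := (l2_sq w).symm
  have han : a ≤ n := by
    have h := dotp_cs w μ₀
    rw [hμ₀, mul_one] at h
    exact h
  have hcos0 : 0 ≤ cosθ := by rw [hcos]; positivity
  have hcos1 : cosθ ≤ 1 := by rw [hcos, div_le_one hn]; exact han
  have hsin0 : 0 ≤ sinθ := hsin ▸ Real.sqrt_nonneg _
  have hcos2 : cosθ^2 ≤ 1 := by
    rw [pow_two]
    calc cosθ * cosθ ≤ 1 * 1 := mul_le_mul hcos1 hcos1 hcos0 zero_le_one
    _ = 1 := by ring
  have hsin2 : sinθ^2 = 1 - cosθ^2 := by rw [hsin]; exact Real.sq_sqrt (by linarith)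
  set b := n * sinθ with hbdef
  have hb0 : 0 ≤ b := mul_nonneg hn.le hsin0
  have hncos : n * cosθ = a := by rw [hcos]; field_simp
  have hab : a^2 + b^2 = n^2 := by
    rw [hbdef]
    linear_combination n^2 * hsin2 - (a + n*cosθ) * hncos
  -- facts about wp = w - a μ₀
  have h1 : dotp (fun i => w i - a * μ₀ i) μ₀ = 0 := by
    rw [dotp_sub_left, ← hadef, hμμ]; ring
  have h2 : dotp w (fun i => w i - a * μ₀ i) = n^2 - a^2 := by
    rw [dotp_sub_right, hww, ← hadef]; ring
  have h3 : dotp (fun i => w i - a * μ₀ i) (fun i => w i - a * μ₀ i) = n^2 - a^2 := by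
    rw [dotp_sub_right, dotp_sub_left, dotp_sub_left, dotp_comm μ₀ w, ← hadef, hμμ, hww]
    ring
  have hb2 : b^2 = n^2 - a^2 := by linarith
  have hl2wp : l2 (fun i => w i - a * μ₀ i) = b := by
    rw [l2_eq_sqrt_dotp, h3, ← hb2, Real.sqrt_sq hb0]
  -- β facts
  have hβ' : β = min (ε * (a / n)) δ := by rw [hβ, hcos]
  have hβ0 : 0 ≤ β := by
    rw [hβ]; exact le_min (mul_nonneg hε.le hcos0) hδ
  have hβδ : β ≤ δ := by rw [hβ]; exact min_le_right _ _
  have hβε : β ≤ ε := by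
    have h := min_le_left (ε * cosθ) δ
    rw [← hβ] at h
    calc β ≤ ε * cosθ := h
    _ ≤ ε * 1 := mul_le_mul_of_nonneg_left hcos1 hε.le
    _ = ε := mul_one ε
  have hβ2 : β^2 ≤ ε^2 := pow_le_pow_left₀ hβ0 hβε 2
  set S := Real.sqrt (ε^2 - β^2) with hSdef
  have hS0 : 0 ≤ S := Real.sqrt_nonneg _
  have hS2 : S^2 = ε^2 - β^2 := Real.sq_sqrt (by linarith)
  have htarget : n * (β * cosθ + S * sinθ) = a * β + b * S := by
    rw [hbdef]; linear_combination β * hncos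
  rw [htarget]
  set c := S / b with hcdef
  have hcb2 : c * (n^2 - a^2) = S * b := by
    rw [← hb2, hcdef]
    rcases eq_or_ne b 0 with hb | hb
    · rw [hb]; ring
    · field_simp
  have hc2b2 : c * (c * (n^2 - a^2)) ≤ ε^2 - β^2 := by
    rw [← hb2, hcdef]
    rcases eq_or_ne b 0 with hbz | hbz
    · rw [hbz]; simp; linarith
    · have hq : S / b * (S / b * b^2) = S * S := by field_simp
      rw [hq]
      have hss : S * S = ε^2 - β^2 := by rw [← hS2]; ring
      linarith
  constructor
  · -- membership: the maximizer
    refine ⟨fun i => β * μ₀ i + c * ((fun i => w i - a * μ₀ i) i), ⟨?_, ?_⟩, ?_⟩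
    · -- l2 ≤ ε
      have hvv : dotp (fun i => β * μ₀ i + c * ((fun i => w i - a * μ₀ i) i))
          (fun i => β * μ₀ i + c * ((fun i => w i - a * μ₀ i) i)) ≤ ε^2 := by
        rw [dotp_lin_right, dotp_lin_left, dotp_lin_left, hμμ, h1, dotp_comm μ₀, h1, h3]
        have : β * (β * 1 + c * 0) + c * (β * 0 + c * (n^2 - a^2)) =
            β^2 + c * (c * (n^2 - a^2)) := by ring
        rw [this]
        linarith
      rw [l2_eq_sqrt_dotp]
      calc Real.sqrt _ ≤ Real.sqrt (ε^2) := Real.sqrt_le_sqrt hvv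
      _ = ε := Real.sqrt_sq hε.le
    · -- |dotp v μ₀| ≤ δ
      rw [dotp_lin_left, hμμ, h1]
      rw [show β * 1 + c * 0 = β by ring, abs_of_nonneg hβ0]
      exact hβδ
    · -- value
      simp only
      rw [dotp_lin_right, ← hadef, h2, hcb2]
      ring
  · -- upper bound
    rintro x ⟨v, ⟨hv1, hv2⟩, rfl⟩
    simp only
    set t := dotp v μ₀ with htdef
    have hvv : dotp v v ≤ ε^2 := by
      rw [← l2_sq]; exact pow_le_pow_left₀ (l2_nonneg v) hv1 2
    have huμ : dotp (fun i => v i - t * μ₀ i) μ₀ = 0 := by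
      rw [dotp_sub_left, ← htdef, hμμ]; ring
    have huu : dotp (fun i => v i - t * μ₀ i) (fun i => v i - t * μ₀ i) = dotp v v - t^2 := by
      rw [dotp_sub_right, dotp_sub_left, dotp_sub_left]
      rw [dotp_comm μ₀ v, ← htdef, hμμ]
      ring
    have ht2 : t^2 ≤ ε^2 := by
      have h := dotp_self_nonneg (fun i => v i - t * μ₀ i)
      rw [huu] at h
      linarith
    have hl2u : l2 (fun i => v i - t * μ₀ i) ≤ Real.sqrt (ε^2 - t^2) := by
      rw [l2_eq_sqrt_dotp, huu]
      exact Real.sqrt_le_sqrt (by linarith)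
    have hwpu : dotp (fun i => w i - a * μ₀ i) (fun i => v i - t * μ₀ i) ≤
        b * Real.sqrt (ε^2 - t^2) := by
      calc dotp (fun i => w i - a * μ₀ i) (fun i => v i - t * μ₀ i)
          ≤ l2 (fun i => w i - a * μ₀ i) * l2 (fun i => v i - t * μ₀ i) := dotp_cs _ _
      _ = b * l2 (fun i => v i - t * μ₀ i) := by rw [hl2wp]
      _ ≤ b * Real.sqrt (ε^2 - t^2) := mul_le_mul_of_nonneg_left hl2u hb0
    have hdwv : dotp w v = a * t + dotp (fun i => w i - a * μ₀ i) (fun i => v i - t * μ₀ i) := by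
      rw [dotp_sub_right, dotp_sub_left, dotp_sub_left]
      rw [dotp_comm μ₀ v, ← htdef, ← hadef, hμμ]
      ring
    have hkey := scalar_key a b n ε δ t hwμ hb0 hn hab hε hδ hv2 ht2
    rw [← hβ'] at hkey
    calc dotp w v ≤ a * t + b * Real.sqrt (ε^2 - t^2) := by
          rw [hdwv]; linarith
    _ ≤ a * β + b * Real.sqrt (ε^2 - β^2) := hkey
    _ = a * β + b * S := by rw [hSdef]
end

section
/- (Theorem 3.) Let d ≥ 1, p ∈ [1,∞] with conjugate exponent q, let w ∈ ℝ^d with w ≠ 0, b ∈ ℝ, ε > 0, and consider balanced Gaussian mixture data with means μ₊, μ₋ and σ > 0. Define the overall ℓp-adversarial rate p_{adv|p} = (1/2)·P_{N(μ₊,σ²I_d)}({x : w·x + b > 0 and there exists v with ‖v‖_p ≤ ε and w·(x+v) + b ≤ 0}) + (1/2)·P_{N(μ₋,σ²I_d)}({x : w·x + b ≤ 0 and there exists v with ‖v‖_p ≤ ε and w·(x+v) + b > 0}). Then p_{adv|p} = 1 − p_m − (1/2)[Φ((w·μ + b')/(‖w‖₂σ) − (‖w‖_q/‖w‖₂)(ε/σ))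 + Φ((w·μ − b')/(‖w‖₂σ) − (‖w‖_q/‖w‖₂)(ε/σ))], where p_m = 1 − (1/2)[Φ((w·μ + b')/(‖w‖₂σ)) + Φ((w·μ − b')/(‖w‖₂σ))]. -/
open MeasureTheory ProbabilityTheory
open scoped ENNReal NNReal

section AuxAdv
open Real
open scoped ENNReal NNReal


lemma aux_dotp_add {d : ℕ} (w x v : Fin d → ℝ) : dotp w (x + v) = dotp w x + dotp w v := by
  simp [dotp, mul_add, Finset.sum_add_distrib]

lemma aux_mul_sign (x : ℝ) : x * Real.sign x = |x| := by
  rcases lt_trichotomy x 0 with h | h | h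
  · rw [Real.sign_of_neg h, abs_of_neg h]; ring
  · simp [h]
  · rw [Real.sign_of_pos h, abs_of_pos h]; ring

lemma aux_abs_sign_le (x : ℝ) : |Real.sign x| ≤ 1 := by
  rcases lt_trichotomy x 0 with h | h | h
  · rw [Real.sign_of_neg h]; norm_num
  · simp [h]
  · rw [Real.sign_of_pos h]; norm_num

lemma aux_sup_abs_nonneg {d : ℕ} (b : Fin d → ℝ) : 0 ≤ ⨆ i, |b i| := by
  rcases Nat.eq_zero_or_pos d with h | h
  · subst h; simp [ciSup_of_empty]
  · have : Nonempty (Fin d) := Fin.pos_iff_nonempty.mp h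
    exact le_ciSup_of_le (Set.Finite.bddAbove (Set.finite_range _)) (Classical.arbitrary _)
      (abs_nonneg _)

lemma aux_le_sup_abs {d : ℕ} (b : Fin d → ℝ) (i : Fin d) : |b i| ≤ ⨆ j, |b j| :=
  le_ciSup (f := fun j => |b j|) (Set.Finite.bddAbove (Set.finite_range _)) i

-- sup-sum bound
lemma aux_key_bound {d : ℕ} (a b : Fin d → ℝ) : |dotp a b| ≤ (⨆ i, |b i|) * ∑ i, |a i| := by
  have h1 : |dotp a b| ≤ ∑ i, |a i * b i| := Finset.abs_sum_le_sum_abs _ _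
  refine h1.trans ?_
  rw [Finset.mul_sum]
  refine Finset.sum_le_sum fun i _ => ?_
  rw [abs_mul, mul_comm]
  exact mul_le_mul_of_nonneg_right (aux_le_sup_abs b i) (abs_nonneg _)

-- Hölder inequality for our lpnorm
lemma aux_holder {d : ℕ} {p q : ℝ≥0∞} (hpq : p.HolderConjugate q) (w v : Fin d → ℝ) :
    |dotp w v| ≤ lpnorm p v * lpnorm q w := by
  rcases eq_or_ne p ∞ with hpt | hpt
  · -- p = ∞, q = 1
    have hq : q = 1 := by
      have := ENNReal.holderConjugate_iff.mp hpq; rw [hpt] at this; simpa using this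
    rw [hpt, hq, lpnorm, lpnorm, if_pos rfl, if_neg (by norm_num)]
    simpa using aux_key_bound w v
  rcases eq_or_ne q ∞ with hqt | hqt
  · -- q = ∞, p = 1
    have hp : p = 1 := by
      have h := ENNReal.holderConjugate_iff.mp hpq; rw [hqt] at h; simpa using h
    rw [hp, hqt, lpnorm, lpnorm, if_pos rfl, if_neg (by norm_num)]
    have := aux_key_bound v w
    rw [show dotp v w = dotp w v by simp [dotp, mul_comm]] at this
    simpa [mul_comm] using this
  · -- 1 < p < ∞
    have hconj : (p.toReal).HolderConjugate (q.toReal) := by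
      rw [Real.holderConjugate_iff]
      constructor
      · -- 1 < p.toReal
        have h1 : 1 < p := by
          rcases (haveI := hpq; ENNReal.HolderConjugate.one_le p q).lt_or_eq with h | h
          · exact h
          · exfalso; rw [← h] at hpq
            have h2 := ENNReal.holderConjugate_iff.mp hpq
            simp only [inv_one] at h2
            have : q⁻¹ = 0 := by
              by_contra hne
              have : 1 < 1 + q⁻¹ := ENNReal.lt_add_right ENNReal.one_ne_top hne
              rw [h2] at this; exact lt_irrefl _ this
            exact hqt (by simpa using this)
        have := ENNReal.toReal_lt_toReal (by norm_num) hpt |>.mpr h1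
        simpa using this
      · -- 1/p.toReal + 1/q.toReal = 1
        have h := ENNReal.holderConjugate_iff.mp hpq
        have hp0 : p ≠ 0 := (haveI := hpq; ENNReal.HolderConjugate.ne_zero p q)
        have hq0 : q ≠ 0 := (haveI := hpq; ENNReal.HolderConjugate.ne_zero q p)
        have : (p⁻¹ + q⁻¹).toReal = (1 : ℝ≥0∞).toReal := by rw [h]
        rw [ENNReal.toReal_add (by simp [hp0]) (by simp [hq0])] at this
        simpa [ENNReal.toReal_inv, one_div] using this
    rw [lpnorm, lpnorm, if_neg hpt, if_neg hqt]
    calc |dotp w v| = |∑ i, v i * w i| := by simp [dotp, mul_comm]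
      _ ≤ ∑ i, |v i * w i| := Finset.abs_sum_le_sum_abs _ _
      _ = ∑ i, |v i| * |w i| := by simp [abs_mul]
      _ ≤ _ := by
          have := Real.inner_le_Lp_mul_Lq (s := Finset.univ) (fun i => |v i|) (fun i => |w i|) hconj
          simpa [abs_abs] using this

lemma aux_lpnorm_nonneg {d : ℕ} (p : ℝ≥0∞) (v : Fin d → ℝ) : 0 ≤ lpnorm p v := by
  unfold lpnorm
  split
  · exact aux_sup_abs_nonneg v
  · positivity

lemma aux_lpnorm_neg {d : ℕ} (p : ℝ≥0∞) (v : Fin d → ℝ) : lpnorm p (-v) = lpnorm p v := by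
  unfold lpnorm; simp

lemma aux_dotp_neg {d : ℕ} (w v : Fin d → ℝ) : dotp w (-v) = -dotp w v := by
  simp [dotp, Finset.sum_neg_distrib]

lemma aux_toReal_conj {p q : ℝ≥0∞} (hpq : p.HolderConjugate q) (hpt : p ≠ ∞) (hqt : q ≠ ∞) :
    (p.toReal).HolderConjugate (q.toReal) := by
  rw [Real.holderConjugate_iff]
  constructor
  · have h1 : 1 < p := by
      rcases (haveI := hpq; ENNReal.HolderConjugate.one_le p q).lt_or_eq with h | h
      · exact h
      · exfalso; rw [← h] at hpq
        have h2 := ENNReal.holderConjugate_iff.mp hpq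
        simp only [inv_one] at h2
        have : q⁻¹ = 0 := by
          by_contra hne
          have : 1 < 1 + q⁻¹ := ENNReal.lt_add_right ENNReal.one_ne_top hne
          rw [h2] at this; exact lt_irrefl _ this
        exact hqt (by simpa using this)
    have := ENNReal.toReal_lt_toReal (by norm_num) hpt |>.mpr h1
    simpa using this
  · have h := ENNReal.holderConjugate_iff.mp hpq
    have hp0 : p ≠ 0 := (haveI := hpq; ENNReal.HolderConjugate.ne_zero p q)
    have hq0 : q ≠ 0 := (haveI := hpq; ENNReal.HolderConjugate.ne_zero q p)
    have : (p⁻¹ + q⁻¹).toReal = (1 : ℝ≥0∞).toReal := by rw [h]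
    rw [ENNReal.toReal_add (by simp [hp0]) (by simp [hq0])] at this
    simpa [ENNReal.toReal_inv, one_div] using this

lemma aux_lpnorm_pos {d : ℕ} {q : ℝ≥0∞} (hq : 1 ≤ q) {w : Fin d → ℝ} (hw : w ≠ 0) :
    0 < lpnorm q w := by
  obtain ⟨j, hj⟩ := Function.ne_iff.mp hw
  have hj' : 0 < |w j| := abs_pos.mpr hj
  unfold lpnorm
  split
  · exact hj'.trans_le (aux_le_sup_abs w j)
  · rename_i hqt
    have hq1 : 1 ≤ q.toReal := by
      rw [show (1:ℝ) = (1:ℝ≥0∞).toReal by simp]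
      exact ENNReal.toReal_mono hqt hq
    have hqr : 0 < q.toReal := by linarith
    have hsum : 0 < ∑ i, |w i| ^ q.toReal := by
      refine Finset.sum_pos' (fun i _ => by positivity) ⟨j, Finset.mem_univ j, ?_⟩
      positivity
    positivity

lemma aux_extremal_min {d : ℕ} {p q : ℝ≥0∞} (hpq : p.HolderConjugate q) {w : Fin d → ℝ}
    (hw : w ≠ 0) {ε : ℝ} (hε : 0 < ε) :
    ∃ v : Fin d → ℝ, lpnorm p v ≤ ε ∧ dotp w v = -(ε * lpnorm q w) := by
  obtain ⟨j0, hj0⟩ := Function.ne_iff.mp hw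
  have hne : Nonempty (Fin d) := ⟨j0⟩
  rcases eq_or_ne p ∞ with hpt | hpt
  · -- p = ∞, q = 1
    have hq : q = 1 := by
      have h := ENNReal.holderConjugate_iff.mp hpq; rw [hpt] at h; simpa using h
    refine ⟨fun i => -ε * Real.sign (w i), ?_, ?_⟩
    · rw [lpnorm, if_pos hpt]
      refine ciSup_le fun i => ?_
      rw [abs_mul, abs_neg, abs_of_pos hε]
      nlinarith [aux_abs_sign_le (w i)]
    · rw [hq, lpnorm, if_neg (by norm_num)]
      simp only [ENNReal.toReal_one, Real.rpow_one, one_div_one]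
      rw [dotp]
      rw [show ∑ i, w i * (-ε * Real.sign (w i)) = -ε * ∑ i, w i * Real.sign (w i) by
        rw [Finset.mul_sum]; congr 1; ext i; ring]
      simp only [aux_mul_sign]
      ring
  rcases eq_or_ne q ∞ with hqt | hqt
  · -- p = 1, q = ∞
    have hp : p = 1 := by
      have h := ENNReal.holderConjugate_iff.mp hpq; rw [hqt] at h; simpa using h
    obtain ⟨j, -, hj⟩ := Finset.exists_max_image (Finset.univ : Finset (Fin d))
      (fun i => |w i|) ⟨j0, Finset.mem_univ j0⟩
    have hsup : (⨆ i, |w i|) = |w j| :=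
      le_antisymm (ciSup_le fun i => hj i (Finset.mem_univ i)) (aux_le_sup_abs w j)
    refine ⟨Pi.single j (-ε * Real.sign (w j)), ?_, ?_⟩
    · rw [hp, lpnorm, if_neg (by norm_num)]
      simp only [ENNReal.toReal_one, Real.rpow_one, one_div_one]
      rw [Finset.sum_eq_single j]
      · rw [Pi.single_eq_same, abs_mul, abs_neg, abs_of_pos hε]
        nlinarith [aux_abs_sign_le (w j)]
      · intro i _ hij; simp [Pi.single_eq_of_ne hij]
      · intro h; exact absurd (Finset.mem_univ j) h
    · rw [hqt, lpnorm, if_pos rfl, hsup, dotp, Finset.sum_eq_single j]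
      · rw [Pi.single_eq_same, show w j * (-ε * Real.sign (w j)) = -ε * (w j * Real.sign (w j))
          by ring, aux_mul_sign]; ring
      · intro i _ hij; simp [Pi.single_eq_of_ne hij]
      · intro h; exact absurd (Finset.mem_univ j) h
  · -- 1 < p < ∞
    have hconj := aux_toReal_conj hpq hpt hqt
    set pr := p.toReal with hpr
    set qr := q.toReal with hqr
    have hpr1 : 1 < pr := hconj.lt
    have hqr1 : 1 < qr := hconj.symm.lt
    set S := ∑ i, |w i| ^ qr with hS
    have hSpos : 0 < S := by
      refine Finset.sum_pos' (fun i _ => by positivity) ⟨j0, Finset.mem_univ j0, ?_⟩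
      have : 0 < |w j0| := abs_pos.mpr hj0
      positivity
    set N := S ^ (1/qr) with hN
    have hNpos : 0 < N := by positivity
    have hqr0 : qr ≠ 0 := by positivity
    have hNq : N ^ qr = S := by
      rw [hN, ← Real.rpow_mul hSpos.le, one_div, inv_mul_cancel₀ hqr0, Real.rpow_one]
    have hprqr : pr * (qr - 1) = qr := by
      have h := hconj.inv_add_inv_eq_one
      have hpr0 : pr ≠ 0 := by positivity
      field_simp at h
      nlinarith [h]
    set v : Fin d → ℝ := fun i => -ε * Real.sign (w i) * |w i| ^ (qr - 1) / N ^ (qr - 1)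
      with hv
    have habs : ∀ i, |v i| ≤ ε * |w i| ^ (qr - 1) / N ^ (qr - 1) := by
      intro i
      rw [hv]
      simp only [abs_div, abs_mul, abs_neg, abs_of_pos hε, abs_abs,
        abs_of_pos (Real.rpow_pos_of_pos hNpos _), Real.abs_rpow_of_nonneg (abs_nonneg (w i)),
        abs_abs]
      have h1 : 0 ≤ |w i| ^ (qr - 1) := Real.rpow_nonneg (abs_nonneg _) _
      have h2 : 0 < N ^ (qr - 1) := Real.rpow_pos_of_pos hNpos _
      have := aux_abs_sign_le (w i)
      rw [div_le_div_iff₀ h2 h2]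
      have hs := aux_abs_sign_le (w i)
      have hsn : (0:ℝ) ≤ |Real.sign (w i)| := abs_nonneg _
      nlinarith [mul_nonneg (mul_nonneg hε.le hsn) h1, mul_nonneg hε.le h1,
        mul_le_mul_of_nonneg_left hs hε.le, mul_le_mul_of_nonneg_right
          (mul_le_mul_of_nonneg_left hs hε.le) h1, h2.le,
        mul_le_mul_of_nonneg_right (mul_le_mul_of_nonneg_right
          (mul_le_mul_of_nonneg_left hs hε.le) h1) h2.le]
    have hrw : ∀ x : ℝ, |x| * |x| ^ (qr - 1) = |x| ^ qr := by
      intro x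
      rw [show qr = 1 + (qr - 1) by ring, Real.rpow_add' (abs_nonneg x) (by
        rw [show 1 + (qr-1) = qr by ring]; exact hqr0), Real.rpow_one]
      ring_nf
    have hNqr1 : 0 < N ^ (qr - 1) := Real.rpow_pos_of_pos hNpos _
    have hSN : S / N ^ (qr - 1) = N := by
      rw [← hNq, show qr = 1 + (qr - 1) by ring,
        Real.rpow_add' hNpos.le (by rw [show 1 + (qr-1) = qr by ring]; exact hqr0),
        Real.rpow_one]
      field_simp
      congr 1; ring
    refine ⟨v, ?_, ?_⟩
    · rw [lpnorm, if_neg hpt, ← hpr]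
      have hsum : ∑ i, |v i| ^ pr ≤ ε ^ pr := by
        have hbound : ∀ i, |v i| ^ pr ≤ ε ^ pr * |w i| ^ qr / S := by
          intro i
          have h2 : 0 < N ^ (qr - 1) := hNqr1
          have h0 : (0:ℝ) ≤ ε * |w i| ^ (qr - 1) / N ^ (qr - 1) := by positivity
          calc |v i| ^ pr ≤ (ε * |w i| ^ (qr - 1) / N ^ (qr - 1)) ^ pr :=
                Real.rpow_le_rpow (abs_nonneg _) (habs i) (by positivity)
            _ = ε ^ pr * |w i| ^ qr / S := by
                rw [Real.div_rpow (by positivity) h2.le,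
                  Real.mul_rpow hε.le (Real.rpow_nonneg (abs_nonneg _) _),
                  ← Real.rpow_mul (abs_nonneg _), ← Real.rpow_mul hNpos.le,
                  mul_comm (qr-1) pr, hprqr, hNq]
        calc ∑ i, |v i| ^ pr ≤ ∑ i, ε ^ pr * |w i| ^ qr / S :=
              Finset.sum_le_sum fun i _ => hbound i
          _ = ε ^ pr := by
              rw [← Finset.sum_div, ← Finset.mul_sum, ← hS, mul_div_assoc,
                div_self hSpos.ne', mul_one]
      calc (∑ i, |v i| ^ pr) ^ (1/pr) ≤ (ε ^ pr) ^ (1/pr) :=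
            Real.rpow_le_rpow (by positivity) hsum (by positivity)
        _ = ε := by
            rw [← Real.rpow_mul hε.le, one_div, mul_inv_cancel₀ (by positivity),
              Real.rpow_one]
    · rw [lpnorm, if_neg hqt, ← hqr, ← hN]
      rw [dotp]
      have : ∀ i, w i * v i = -ε * |w i| ^ qr / N ^ (qr - 1) := by
        intro i
        rw [hv]
        have : w i * (-ε * Real.sign (w i) * |w i| ^ (qr - 1) / N ^ (qr - 1))
            = -ε * ((w i * Real.sign (w i)) * |w i| ^ (qr - 1)) / N ^ (qr - 1) := by ring
        rw [this, aux_mul_sign, hrw]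
      simp only [this]
      rw [show ∑ i, -ε * |w i| ^ qr / N ^ (qr - 1)
          = (-ε / N ^ (qr - 1)) * ∑ i, |w i| ^ qr by
        rw [Finset.mul_sum]; congr 1; ext i; ring, ← hS]
      rw [show (-ε / N ^ (qr - 1)) * S = -ε * (S / N ^ (qr - 1)) by ring, hSN]
      ring

lemma aux_key_le {d : ℕ} {p q : ℝ≥0∞} (hpq : p.HolderConjugate q) {w : Fin d → ℝ}
    (hw : w ≠ 0) {ε : ℝ} (hε : 0 < ε) (t : ℝ) :
    (∃ v : Fin d → ℝ, lpnorm p v ≤ ε ∧ dotp w v ≤ t) ↔ -(ε * lpnorm q w) ≤ t := by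
  constructor
  · rintro ⟨v, h1, h2⟩
    have hh := aux_holder hpq w v
    have hqn : 0 ≤ lpnorm q w := aux_lpnorm_nonneg q w
    have : -(lpnorm p v * lpnorm q w) ≤ dotp w v := neg_le_of_abs_le hh
    have h3 : lpnorm p v * lpnorm q w ≤ ε * lpnorm q w :=
      mul_le_mul_of_nonneg_right h1 hqn
    linarith
  · intro ht
    obtain ⟨v, h1, h2⟩ := aux_extremal_min hpq hw hε
    exact ⟨v, h1, by linarith [h2 ▸ le_refl (dotp w v)]⟩

lemma aux_key_lt {d : ℕ} {p q : ℝ≥0∞} (hpq : p.HolderConjugate q) {w : Fin d → ℝ}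
    (hw : w ≠ 0) {ε : ℝ} (hε : 0 < ε) (t : ℝ) :
    (∃ v : Fin d → ℝ, lpnorm p v ≤ ε ∧ t < dotp w v) ↔ t < ε * lpnorm q w := by
  constructor
  · rintro ⟨v, h1, h2⟩
    have hh := aux_holder hpq w v
    have hqn : 0 ≤ lpnorm q w := aux_lpnorm_nonneg q w
    have : dotp w v ≤ lpnorm p v * lpnorm q w := le_of_abs_le hh
    have h3 : lpnorm p v * lpnorm q w ≤ ε * lpnorm q w :=
      mul_le_mul_of_nonneg_right h1 hqn
    linarith
  · intro ht
    obtain ⟨v, h1, h2⟩ := aux_extremal_min hpq hw hε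
    refine ⟨-v, by rw [aux_lpnorm_neg]; exact h1, ?_⟩
    rw [aux_dotp_neg, h2]
    linarith


lemma aux_real_pdf_conv {a b : ℝ} (ha : 0 < a) (hb : 0 < b) (m₁ m₂ z x : ℝ) :
    ((Real.sqrt (2*π*a))⁻¹ * rexp (-(x - m₁)^2/(2*a))) *
      ((Real.sqrt (2*π*b))⁻¹ * rexp (-(z - x - m₂)^2/(2*b)))
    = ((Real.sqrt (2*π*(a+b)))⁻¹ * rexp (-(z - (m₁+m₂))^2/(2*(a+b)))) *
      ((Real.sqrt (2*π*(a*b/(a+b))))⁻¹ *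
        rexp (-(x - (b*m₁+a*(z-m₂))/(a+b))^2/(2*(a*b/(a+b))))) := by
  have hab : 0 < a + b := by linarith
  have hπ := Real.pi_pos
  rw [mul_mul_mul_comm, mul_mul_mul_comm ((Real.sqrt (2*π*(a+b)))⁻¹), ← Real.exp_add,
    ← Real.exp_add]
  congr 1
  · rw [← mul_inv, ← mul_inv, ← Real.sqrt_mul (by positivity), ← Real.sqrt_mul (by positivity)]
    congr 2
    field_simp
  · congr 1
    field_simp
    ring

lemma aux_pdf_conv (m₁ m₂ : ℝ) {v₁ v₂ : ℝ≥0} (h₁ : v₁ ≠ 0) (h₂ : v₂ ≠ 0) (z x : ℝ) :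
    gaussianPDFReal m₁ v₁ x * gaussianPDFReal m₂ v₂ (z - x)
    = gaussianPDFReal (m₁+m₂) (v₁+v₂) z *
      gaussianPDFReal (((v₂:ℝ)*m₁+(v₁:ℝ)*(z-m₂))/((v₁:ℝ)+(v₂:ℝ))) (v₁*v₂/(v₁+v₂)) x := by
  have ha : 0 < (v₁:ℝ) := by positivity
  have hb : 0 < (v₂:ℝ) := by positivity
  have := aux_real_pdf_conv ha hb m₁ m₂ z x
  simp only [gaussianPDFReal]
  rw [NNReal.coe_add]
  rw [show ((v₁*v₂/(v₁+v₂) : ℝ≥0) : ℝ) = (v₁:ℝ)*(v₂:ℝ)/((v₁:ℝ)+(v₂:ℝ)) by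
    rw [NNReal.coe_div, NNReal.coe_mul, NNReal.coe_add]]
  convert this using 4

lemma aux_conv_ne_zero {v₁ v₂ : ℝ≥0} (h₁ : v₁ ≠ 0) (h₂ : v₂ ≠ 0) : v₁*v₂/(v₁+v₂) ≠ 0 := by
  have hs : v₁ + v₂ ≠ 0 := fun h => h₁ (by
    have := (add_eq_zero (a := v₁) (b := v₂)).mp h
    exact this.1)
  rw [div_eq_mul_inv]
  exact mul_ne_zero (mul_ne_zero h₁ h₂) (inv_ne_zero hs)

lemma aux_gauss_conv (m₁ m₂ : ℝ) (v₁ v₂ : ℝ≥0) :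
    Measure.map (fun z : ℝ × ℝ => z.1 + z.2)
      ((gaussianReal m₁ v₁).prod (gaussianReal m₂ v₂)) = gaussianReal (m₁+m₂) (v₁+v₂) := by
  rcases eq_or_ne v₁ 0 with h₁ | h₁
  · subst h₁
    rw [gaussianReal_zero_var, Measure.dirac_prod, Measure.map_map (by fun_prop) (by fun_prop)]
    have := gaussianReal_map_const_add (μ := m₂) (v := v₂) m₁
    rw [show m₂ + m₁ = m₁ + m₂ by ring] at this
    rw [zero_add]
    exact this
  rcases eq_or_ne v₂ 0 with h₂ | h₂
  · subst h₂
    rw [gaussianReal_zero_var, Measure.prod_dirac, Measure.map_map (by fun_prop) (by fun_prop)]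
    simpa [Function.comp_def, add_zero] using gaussianReal_map_add_const (μ := m₁) (v := v₁) m₂
  · have hsum : v₁ + v₂ ≠ 0 := fun h => h₁ ((add_eq_zero (a := v₁) (b := v₂)).mp h).1
    ext s hs
    rw [Measure.map_apply (by fun_prop) hs,
      Measure.prod_apply (measurable_add hs)]
    have step1 : ∀ x : ℝ, (gaussianReal m₂ v₂) (Prod.mk x ⁻¹' ((fun z : ℝ × ℝ => z.1 + z.2) ⁻¹' s))
        = ∫⁻ z in s, gaussianPDF m₂ v₂ (z - x) ∂volume := by
      intro x
      have hmap : (gaussianReal m₂ v₂).map (x + ·) = gaussianReal (m₂ + x) v₂ :=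
        gaussianReal_map_const_add x
      have : (gaussianReal m₂ v₂) (Prod.mk x ⁻¹' ((fun z : ℝ × ℝ => z.1 + z.2) ⁻¹' s))
          = ((gaussianReal m₂ v₂).map (x + ·)) s := by
        rw [Measure.map_apply (by fun_prop) hs]
        rfl
      rw [this, hmap, gaussianReal_apply _ h₂ s]
      refine setLIntegral_congr_fun hs (fun z _ => ?_)
      unfold gaussianPDF gaussianPDFReal
      congr 2
      ring
    simp_rw [step1]
    rw [gaussianReal_of_var_ne_zero _ h₁,
      lintegral_withDensity_eq_lintegral_mul _ (measurable_gaussianPDF _ _)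
        (Measurable.lintegral_prod_right' (f := fun p : ℝ × ℝ => gaussianPDF m₂ v₂ (p.2 - p.1))
          ((measurable_gaussianPDF m₂ v₂).comp (measurable_snd.sub measurable_fst)))]
    -- now: ∫⁻ x, gaussianPDF m₁ v₁ x * ∫⁻ z in s, gaussianPDF m₂ v₂ (z - x) ∂volume ∂volume
    have step2 : ∀ x : ℝ, gaussianPDF m₁ v₁ x * ∫⁻ z in s, gaussianPDF m₂ v₂ (z - x) ∂volume
        = ∫⁻ z in s, gaussianPDF m₁ v₁ x * gaussianPDF m₂ v₂ (z - x) ∂volume := by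
      intro x
      rw [lintegral_const_mul (μ := volume.restrict s)
        (f := fun z => gaussianPDF m₂ v₂ (z - x)) _
        ((measurable_gaussianPDF m₂ v₂).comp (measurable_id'.sub_const x))]
    simp only [Pi.mul_apply]
    simp_rw [step2]
    rw [lintegral_lintegral_swap (by
      apply Measurable.aemeasurable
      exact ((measurable_gaussianPDF m₁ v₁).comp measurable_fst).mul
        ((measurable_gaussianPDF m₂ v₂).comp (measurable_snd.sub measurable_fst)))]
    -- pointwise convolution identity
    have step3 : ∀ z : ℝ, ∫⁻ x, gaussianPDF m₁ v₁ x * gaussianPDF m₂ v₂ (z - x) ∂volume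
        = gaussianPDF (m₁+m₂) (v₁+v₂) z := by
      intro z
      have heq : ∀ x : ℝ, gaussianPDF m₁ v₁ x * gaussianPDF m₂ v₂ (z - x)
          = gaussianPDF (m₁+m₂) (v₁+v₂) z *
            gaussianPDF (((v₂:ℝ)*m₁+(v₁:ℝ)*(z-m₂))/((v₁:ℝ)+(v₂:ℝ))) (v₁*v₂/(v₁+v₂)) x := by
        intro x
        unfold gaussianPDF
        rw [← ENNReal.ofReal_mul (gaussianPDFReal_nonneg _ _ _),
          ← ENNReal.ofReal_mul (gaussianPDFReal_nonneg _ _ _), aux_pdf_conv m₁ m₂ h₁ h₂ z x]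
      simp_rw [heq]
      rw [lintegral_const_mul _ (measurable_gaussianPDF _ _),
        lintegral_gaussianPDF_eq_one _ (aux_conv_ne_zero h₁ h₂), mul_one]
    simp_rw [step3]
    rw [gaussianReal_apply _ hsum s]

lemma aux_gauss_map_dotp : ∀ (d : ℕ) (w m : Fin d → ℝ) (v : ℝ≥0),
    Measure.map (fun x : Fin d → ℝ => ∑ i, w i * x i)
      (Measure.pi fun i => gaussianReal (m i) v)
    = gaussianReal (∑ i, w i * m i) (∑ i, ((w i)^2).toNNReal * v) := by
  intro d
  induction d with
  | zero =>
      intro w m v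
      simp only [Finset.univ_eq_empty, Finset.sum_empty]
      rw [show (fun x : Fin 0 → ℝ => (0:ℝ)) = (fun _ => 0) from rfl]
      have : IsProbabilityMeasure (Measure.pi fun i : Fin 0 => gaussianReal (m i) v) :=
        inferInstance
      rw [Measure.map_const, measure_univ, one_smul, gaussianReal_zero_var]
  | succ n ih =>
      intro w m v
      have hmp := measurePreserving_piFinSuccAbove (fun i : Fin (n+1) => gaussianReal (m i) v) 0
      set e := MeasurableEquiv.piFinSuccAbove (fun _ : Fin (n+1) => ℝ) 0 with he
      have hcomp : (fun x : Fin (n+1) → ℝ => ∑ i, w i * x i)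
          = (fun p : ℝ × (Fin n → ℝ) => w 0 * p.1 + ∑ j, w j.succ * p.2 j) ∘ e := by
        ext x
        simp only [Function.comp_apply, he, MeasurableEquiv.piFinSuccAbove_apply]
        rw [Fin.sum_univ_succ]
        simp [Fin.succAbove_zero, Fin.tail]
      rw [hcomp, ← Measure.map_map (by fun_prop) e.measurable, hmp.map_eq]
      have hg : (fun p : ℝ × (Fin n → ℝ) => w 0 * p.1 + ∑ j, w j.succ * p.2 j)
          = (fun q : ℝ × ℝ => q.1 + q.2) ∘
            (Prod.map (fun a : ℝ => w 0 * a) (fun y : Fin n → ℝ => ∑ j, w j.succ * y j)) := by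
        ext p; rfl
      rw [hg, ← Measure.map_map (by fun_prop) (by fun_prop),
        ← Measure.map_prod_map _ _ (by fun_prop) (by fun_prop)]
      have h1 : Measure.map (fun a : ℝ => w 0 * a) (gaussianReal (m 0) v)
          = gaussianReal (w 0 * m 0) (((w 0)^2).toNNReal * v) := by
        rw [gaussianReal_map_const_mul (w 0)]
        congr 1
        ext
        simp [Real.coe_toNNReal _ (sq_nonneg (w 0))]
      have h2 := ih (fun j => w j.succ) (fun j => m j.succ) v
      have h2' : Measure.map (fun y : Fin n → ℝ => ∑ j, w j.succ * y j)
          (Measure.pi fun j : Fin n => gaussianReal (m (Fin.succAbove 0 j)) v)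
          = gaussianReal (∑ j : Fin n, w j.succ * m j.succ)
            (∑ j : Fin n, ((w j.succ)^2).toNNReal * v) := by
        rw [show (fun j : Fin n => gaussianReal (m (Fin.succAbove 0 j)) v)
          = fun j => gaussianReal (m j.succ) v by ext j; simp [Fin.succAbove_zero]]
        exact h2
      rw [h1, h2', aux_gauss_conv, Fin.sum_univ_succ, Fin.sum_univ_succ]



lemma aux_gaussianReal_eq_map (M : ℝ) {V : ℝ≥0} (hV : V ≠ 0) :
    gaussianReal M V
      = Measure.map (fun x => Real.sqrt V * x + M) (gaussianReal 0 1) := by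
  have h1 : (NNReal.mk ((Real.sqrt V)^2) (sq_nonneg _) : ℝ≥0) = V := by
    ext; simp [Real.sq_sqrt V.coe_nonneg]
  have hmul := gaussianReal_map_const_mul (μ := 0) (v := 1) (Real.sqrt V)
  rw [mul_zero, h1, mul_one] at hmul
  have : (fun x : ℝ => Real.sqrt V * x + M)
      = (· + M) ∘ (fun x => Real.sqrt V * x) := rfl
  rw [this, ← Measure.map_map (by fun_prop) (by fun_prop), hmul,
    gaussianReal_map_add_const, zero_add]

lemma aux_gaussianReal_Iic (M : ℝ) {V : ℝ≥0} (hV : V ≠ 0) (t : ℝ) :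
    (gaussianReal M V (Set.Iic t)).toReal = Phi ((t - M) / Real.sqrt V) := by
  have hs : 0 < Real.sqrt V := Real.sqrt_pos.mpr (by positivity)
  rw [aux_gaussianReal_eq_map M hV, Measure.map_apply (by fun_prop) measurableSet_Iic]
  congr 2
  ext x
  simp only [Set.mem_preimage, Set.mem_Iic]
  rw [le_div_iff₀ hs]
  constructor <;> intro h <;> nlinarith

lemma aux_gaussian_no_atom {V : ℝ≥0} (hV : V ≠ 0) (M x : ℝ) : gaussianReal M V {x} = 0 :=
  gaussianReal_absolutelyContinuous M hV (volume_singleton)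

lemma aux_Phi_neg (x : ℝ) : Phi (-x) = 1 - Phi x := by
  have hsym : Measure.map (fun y : ℝ => -y) (gaussianReal 0 1) = gaussianReal 0 1 := by
    have := gaussianReal_map_const_mul (μ := 0) (v := 1) (-1)
    simp only [mul_zero] at this
    rw [show (fun y : ℝ => -y) = ((-1 : ℝ) * ·) by ext y; ring, this]
    congr 1
    ext; norm_num
  have h1 : (gaussianReal 0 1) (Set.Iic (-x)) = (gaussianReal 0 1) (Set.Ici x) := by
    conv_lhs => rw [← hsym]
    rw [Measure.map_apply (by fun_prop) measurableSet_Iic]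
    congr 1
    ext y
    simp
  have h2 : (gaussianReal 0 1) (Set.Ici x) = (gaussianReal 0 1) (Set.Ioi x) := by
    rw [← Set.Ioi_union_left, measure_union (by simp [Set.disjoint_left]; exact fun a ha => ne_of_gt ha) (by simp),
      aux_gaussian_no_atom one_ne_zero 0 x, add_zero]
  have h3 : (gaussianReal 0 1) (Set.Ioi x) = 1 - (gaussianReal 0 1) (Set.Iic x) := by
    have hc : Set.Ioi x = (Set.Iic x)ᶜ := (Set.compl_Iic).symm
    rw [hc, measure_compl measurableSet_Iic (measure_ne_top _ _), measure_univ]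
  rw [Phi, Phi, h1, h2, h3, ENNReal.toReal_sub_of_le prob_le_one ENNReal.one_ne_top,
    ENNReal.toReal_one]

lemma aux_gaussianReal_Ioc_toReal {V : ℝ≥0} (hV : V ≠ 0) (M a b : ℝ) (hab : a ≤ b) :
    (gaussianReal M V (Set.Ioc a b)).toReal
      = Phi ((b - M)/Real.sqrt V) - Phi ((a - M)/Real.sqrt V) := by
  have hfin : gaussianReal M V (Set.Iic a) ≠ ∞ := measure_ne_top _ _
  have hsub : Set.Iic a ⊆ Set.Iic b := Set.Iic_subset_Iic.mpr hab
  have hdiff : Set.Iic b \ Set.Iic a = Set.Ioc a b := Set.Iic_sdiff_Iic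
  rw [← hdiff, measure_diff hsub (by simp) hfin,
    ENNReal.toReal_sub_of_le (measure_mono hsub) (measure_ne_top _ _),
    aux_gaussianReal_Iic M hV, aux_gaussianReal_Iic M hV]

end AuxAdv

/-- Theorem 3: the overall `ℓp`-adversarial rate of a linear
classifier for balanced Gaussian mixture data. -/
theorem lp_adversarial_rate {d : ℕ} (hd : 1 ≤ d)
    (p q : ℝ≥0∞) (hp : 1 ≤ p) (hpq : 1/p + 1/q = 1)
    (w : Fin d → ℝ) (hw : w ≠ 0) (b ε : ℝ) (hε : 0 < ε)
    (μp μm : Fin d → ℝ) (σ : ℝ) (hσ : 0 < σ)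
    (μ μbar : Fin d → ℝ) (b' : ℝ)
    (hμ : μ = (1/2 : ℝ) • (μp - μm)) (hμbar : μbar = (1/2 : ℝ) • (μp + μm))
    (hb' : b' = dotp w μbar + b)
    (padv pm : ℝ)
    (hpadv : padv =
        (1/2) * ((gaussPi μp σ) {x : Fin d → ℝ | 0 < dotp w x + b ∧
            ∃ v : Fin d → ℝ, lpnorm p v ≤ ε ∧ dotp w (x + v) + b ≤ 0}).toReal
      + (1/2) * ((gaussPi μm σ) {x : Fin d → ℝ | dotp w x + b ≤ 0 ∧
            ∃ v : Fin d → ℝ, lpnorm p v ≤ ε ∧ 0 < dotp w (x + v) + b}).toReal)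
    (hpm : pm = 1 - (1/2) * (Phi ((dotp w μ + b') / (l2 w * σ)) +
                              Phi ((dotp w μ - b') / (l2 w * σ)))) :
    padv = 1 - pm - (1/2) *
        (Phi ((dotp w μ + b') / (l2 w * σ) - (lpnorm q w / l2 w) * (ε / σ)) +
         Phi ((dotp w μ - b') / (l2 w * σ) - (lpnorm q w / l2 w) * (ε / σ))) := by
  have hpq' : p.HolderConjugate q := ⟨by simpa [one_div] using hpq⟩
  obtain ⟨j0, hj0⟩ := Function.ne_iff.mp hw
  have hwj0 : w j0 ≠ 0 := hj0
  have hsum2 : 0 < ∑ i, (w i)^2 :=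
    Finset.sum_pos' (fun i _ => sq_nonneg _) ⟨j0, Finset.mem_univ _, by positivity⟩
  have hL : 0 < l2 w := Real.sqrt_pos.mpr hsum2
  set N := lpnorm q w with hNdef
  have hN : 0 < N := aux_lpnorm_pos hpq'.symm.one_le hw
  set c := ε * N with hcdef
  have hc : 0 < c := mul_pos hε hN
  set s := l2 w * σ with hsdef
  have hs : 0 < s := mul_pos hL hσ
  set V : ℝ≥0 := ∑ i, ((w i)^2).toNNReal * ((σ^2).toNNReal) with hVdef
  have hVc : (V : ℝ) = s^2 := by
    push_cast [hVdef]
    rw [Finset.sum_congr rfl (fun i _ => by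
      rw [Real.coe_toNNReal _ (sq_nonneg (w i)), Real.coe_toNNReal _ (sq_nonneg σ)])]
    rw [← Finset.sum_mul, hsdef, mul_pow, l2, Real.sq_sqrt hsum2.le]
  have hV0 : V ≠ 0 := by
    intro h
    have : (V : ℝ) = 0 := by rw [h]; simp
    rw [hVc] at this
    nlinarith
  have hsqrtV : Real.sqrt V = s := by rw [hVc]; exact Real.sqrt_sq hs.le
  have hmeas : Measurable (fun x : Fin d → ℝ => dotp w x) := by
    unfold dotp
    exact Finset.measurable_sum _ fun i _ => (measurable_pi_apply i).const_mul _
  have hmap : ∀ m : Fin d → ℝ,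
      Measure.map (fun x => dotp w x) (gaussPi m σ) = gaussianReal (dotp w m) V := by
    intro m
    have := aux_gauss_map_dotp d w m ((σ^2).toNNReal)
    rw [gaussPi]
    unfold dotp
    rw [this]
  -- set identities
  have hAp : {x : Fin d → ℝ | 0 < dotp w x + b ∧
        ∃ v : Fin d → ℝ, lpnorm p v ≤ ε ∧ dotp w (x + v) + b ≤ 0}
      = (fun x => dotp w x) ⁻¹' (Set.Ioc (-b) (c - b)) := by
    ext x
    simp only [Set.mem_setOf_eq, Set.mem_preimage, Set.mem_Ioc]
    have h1 : (∃ v : Fin d → ℝ, lpnorm p v ≤ ε ∧ dotp w (x + v) + b ≤ 0)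
        ↔ (∃ v : Fin d → ℝ, lpnorm p v ≤ ε ∧ dotp w v ≤ -(dotp w x + b)) := by
      constructor <;> rintro ⟨v, hv1, hv2⟩ <;> refine ⟨v, hv1, ?_⟩ <;>
        rw [aux_dotp_add] at * <;> linarith
    rw [h1, aux_key_le hpq' hw hε]
    rw [← hNdef, ← hcdef]
    constructor <;> rintro ⟨u1, u2⟩ <;> exact ⟨by linarith, by linarith⟩
  have hAm : {x : Fin d → ℝ | dotp w x + b ≤ 0 ∧
        ∃ v : Fin d → ℝ, lpnorm p v ≤ ε ∧ 0 < dotp w (x + v) + b}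
      = (fun x => dotp w x) ⁻¹' (Set.Ioc (-c - b) (-b)) := by
    ext x
    simp only [Set.mem_setOf_eq, Set.mem_preimage, Set.mem_Ioc]
    have h1 : (∃ v : Fin d → ℝ, lpnorm p v ≤ ε ∧ 0 < dotp w (x + v) + b)
        ↔ (∃ v : Fin d → ℝ, lpnorm p v ≤ ε ∧ -(dotp w x + b) < dotp w v) := by
      constructor <;> rintro ⟨v, hv1, hv2⟩ <;> refine ⟨v, hv1, ?_⟩ <;>
        rw [aux_dotp_add] at * <;> linarith
    rw [h1, aux_key_lt hpq' hw hε]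
    rw [← hNdef, ← hcdef]
    constructor <;> rintro ⟨u1, u2⟩ <;> exact ⟨by linarith, by linarith⟩
  -- measure computations
  have hMp : ((gaussPi μp σ) {x : Fin d → ℝ | 0 < dotp w x + b ∧
        ∃ v : Fin d → ℝ, lpnorm p v ≤ ε ∧ dotp w (x + v) + b ≤ 0}).toReal
      = Phi ((c - b - dotp w μp)/s) - Phi ((-b - dotp w μp)/s) := by
    rw [hAp, ← Measure.map_apply hmeas measurableSet_Ioc, hmap,
      aux_gaussianReal_Ioc_toReal hV0 _ _ _ (by linarith), hsqrtV]
  have hMm : ((gaussPi μm σ) {x : Fin d → ℝ | dotp w x + b ≤ 0 ∧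
        ∃ v : Fin d → ℝ, lpnorm p v ≤ ε ∧ 0 < dotp w (x + v) + b}).toReal
      = Phi ((-b - dotp w μm)/s) - Phi ((-c - b - dotp w μm)/s) := by
    rw [hAm, ← Measure.map_apply hmeas measurableSet_Ioc, hmap,
      aux_gaussianReal_Ioc_toReal hV0 _ _ _ (by linarith), hsqrtV]
  -- mean decompositions
  have hμp' : dotp w μp = dotp w μbar + dotp w μ := by
    rw [hμ, hμbar, dotp, dotp, dotp, ← Finset.sum_add_distrib]
    refine Finset.sum_congr rfl fun i _ => ?_
    simp only [Pi.smul_apply, Pi.sub_apply, Pi.add_apply, smul_eq_mul]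
    ring
  have hμm' : dotp w μm = dotp w μbar - dotp w μ := by
    rw [hμ, hμbar, dotp, dotp, dotp, ← Finset.sum_sub_distrib]
    refine Finset.sum_congr rfl fun i _ => ?_
    simp only [Pi.smul_apply, Pi.sub_apply, Pi.add_apply, smul_eq_mul]
    ring
  -- argument rewrites
  have e1 : (c - b - dotp w μp)/s = -((dotp w μ + b')/s - c/s) := by
    rw [hμp', hb']; field_simp; ring
  have e2 : (-b - dotp w μp)/s = -((dotp w μ + b')/s) := by
    rw [hμp', hb', show (-b - (dotp w μbar + dotp w μ))
      = -(dotp w μ + (dotp w μbar + b)) by ring, neg_div]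
  have e3 : (-b - dotp w μm)/s = (dotp w μ - b')/s := by
    rw [hμm', hb']; ring_nf
  have e4 : (-c - b - dotp w μm)/s = (dotp w μ - b')/s - c/s := by
    rw [hμm', hb']; field_simp; ring
  rw [e1, aux_Phi_neg, e2, aux_Phi_neg] at hMp
  rw [e3, e4] at hMm
  have hK : (N / l2 w) * (ε / σ) = c / s := by
    rw [hcdef, hsdef]; field_simp
  rw [hpadv, hpm, hMp, hMm, hK]
  ring
end
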